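/- For a 2×2 real symmetric matrix with entries a₁₁, a₁₂, a₂₂, there exists an angle θ such that the Jacobi rotation G(θ) = [[cos θ, -sin θ],[sin θ, cos θ]] applied as G A Gᵀ produces a matrix B with B₁₂ = 0 and |B₁₁| ≥ |a₁₁|. -/

import Mathlib

open Matrix Real

lemma exists_cos_sin (x y : ℝ) (h : x^2 + y^2 = 1) : ∃ t, Real.cos t = x ∧ Real.sin t = y := by
  have hx1 : -1 ≤ x := by nlinarith [sq_nonneg y]
  have hx2 : x ≤ 1 := by nlinarith [sq_nonneg y]
  have hsin : Real.sin (Real.arccos x) = |y| := by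
    rw [Real.sin_arccos, show (1:ℝ) - x^2 = y^2 by linarith]
    exact Real.sqrt_sq_eq_abs y
  rcases le_or_gt 0 y with hy | hy
  · exact ⟨Real.arccos x, Real.cos_arccos hx1 hx2, by rw [hsin, abs_of_nonneg hy]⟩
  · exact ⟨-Real.arccos x, by rw [Real.cos_neg]; exact Real.cos_arccos hx1 hx2,
      by rw [Real.sin_neg, hsin, abs_of_neg hy, neg_neg]⟩

theorem stmt_0 (a11 a12 a22 : ℝ) :
    ∃ θ : ℝ,
      let G : Matrix (Fin 2) (Fin 2) ℝ := !![Real.cos θ, -Real.sin θ; Real.sin θ, Real.cos θ]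
      let A : Matrix (Fin 2) (Fin 2) ℝ := !![a11, a12; a12, a22]
      let B : Matrix (Fin 2) (Fin 2) ℝ := G * A * Gᵀ
      B 0 1 = 0 ∧ |a11| ≤ |B 0 0| := by
  set r : ℝ := Real.sqrt (((a11 - a22)/2)^2 + a12^2) with hrdef
  have hrnn : 0 ≤ r := Real.sqrt_nonneg _
  have hr2 : r^2 = ((a11 - a22)/2)^2 + a12^2 := Real.sq_sqrt (by positivity)
  by_cases h0 : r = 0
  · have ha12 : a12 = 0 := by nlinarith [sq_nonneg ((a11 - a22)/2), sq_nonneg a12]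
    refine ⟨0, ?_⟩
    simp [Matrix.mul_apply, Fin.sum_univ_two, Matrix.vecHead, Matrix.vecTail, ha12]
  · have hrpos : 0 < r := lt_of_le_of_ne hrnn (Ne.symm h0)
    set ε : ℝ := if 0 ≤ a11 + a22 then 1 else -1 with hε
    have hε2 : ε^2 = 1 := by
      rcases ite_eq_or_eq (0 ≤ a11 + a22) (1:ℝ) (-1) with h | h <;> rw [hε, h] <;> ring
    obtain ⟨t, hct, hst⟩ := exists_cos_sin (ε*((a11 - a22)/2)/r) (-(ε*a12)/r) (by
      have key : (ε*((a11 - a22)/2)/r)^2 + (-(ε*a12)/r)^2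
          = ε^2 * (((a11 - a22)/2)^2 + a12^2) / r^2 := by ring
      rw [key, hε2, one_mul, ← hr2, div_self (pow_ne_zero 2 h0)])
    refine ⟨t/2, ?_⟩
    set c := Real.cos (t/2) with hc
    set s := Real.sin (t/2) with hs
    have h1 : c^2 + s^2 = 1 := by rw [hc, hs, add_comm]; exact Real.sin_sq_add_cos_sq _
    have h2 : 2*s*c = Real.sin t := by
      rw [hc, hs, ← Real.sin_two_mul]; ring_nf
    have h3 : c^2 - s^2 = Real.cos t := by
      have := Real.cos_two_mul (t/2)
      have ht : 2 * (t/2) = t := by ring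
      rw [ht] at this
      rw [← hc] at this
      nlinarith [h1]
    have hs2' : (2*s*c) * r = -(ε*a12) := by
      rw [h2, hst]; field_simp
    have hc2' : (c^2 - s^2) * r = ε*((a11 - a22)/2) := by
      rw [h3, hct]; field_simp
    simp only []
    simp [Matrix.mul_apply, Fin.sum_univ_two, Matrix.vecHead, Matrix.vecTail]
    constructor
    · -- off-diagonal is zero
      have hP : r * ((c * a11 + -(s * a12)) * s + (c * a12 + -(s * a22)) * c) = r * 0 := by
        linear_combination ((a11-a22)/2) * hs2' + a12 * hc2'
      exact mul_left_cancel₀ h0 hP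
    · -- |a11| ≤ |B00|
      have hQ : r * ((c * a11 + -(s * a12)) * c + -((c * a12 + -(s * a22)) * s))
          = r * ((a11 + a22)/2 + ε * r) := by
        linear_combination (r*(a11+a22)/2) * h1 + ((a11-a22)/2) * hc2' + (-a12) * hs2' + (-ε) * hr2
      have hB : (c * a11 + -(s * a12)) * c + -((c * a12 + -(s * a22)) * s)
          = (a11 + a22)/2 + ε * r := mul_left_cancel₀ h0 hQ
      rw [hB]
      have hdr : |(a11 - a22)/2| ≤ r := by
        rw [← Real.sqrt_sq_eq_abs]
        exact Real.sqrt_le_sqrt (by nlinarith [sq_nonneg a12])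
      rw [abs_le] at hdr
      obtain ⟨hd1, hd2⟩ := hdr
      rcases le_or_gt 0 (a11 + a22) with hm0 | hm0
      · have hε1 : ε = 1 := if_pos hm0
        rw [hε1, one_mul,
          abs_of_nonneg (show (0:ℝ) ≤ (a11 + a22)/2 + r by linarith), abs_le]
        constructor <;> linarith
      · have hε1 : ε = -1 := if_neg (not_le.mpr hm0)
        rw [hε1, show (a11 + a22)/2 + -1 * r = -(r - (a11 + a22)/2) by ring, abs_neg,
          abs_of_nonneg (show (0:ℝ) ≤ r - (a11 + a22)/2 by linarith), abs_le]
        constructor <;> linarith
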